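/- Let L₁, L₂ be primitive non-proportional integral linear forms and Q a primitive quadratic form irreducible over ℚ, and define ρ(d₁,d₂,d₃) = #{x ∈ [0,d₁d₂d₃)² : d_i | L_i(x), d₃ | Q(x)} and ρ* as the analogous count with the extra condition gcd(x₁,x₂,d₁d₂d₃)=1. Then for every prime p, ρ(p^{ν₁},p^{ν₂},p^{ν₃}) = Σ_{0 ≤ k ≤ max{ν₁,ν₂,⌈ν₃/2⌉}} ρ*(p^{max{ν₁−k,0}}, p^{max{ν₂−k,0}}, p^{max{ν₃−2k,0}}) · p^{m_k}, where m_k = 2(min{ν₁,k} + min{ν₂,k} + min{ν₃,2k} − k). -/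

import Mathlib

/-- `ρ(d₁,d₂,d₃)`: number of `x ∈ [0, d₁d₂d₃)²` with `dᵢ ∣ Lᵢ(x)` and `d₃ ∣ Q(x)`. -/
def rho (a₁ b₁ a₂ b₂ a₃ b₃ c₃ : ℤ) (d₁ d₂ d₃ : ℕ) : ℕ :=
  ((Finset.range (d₁ * d₂ * d₃) ×ˢ Finset.range (d₁ * d₂ * d₃)).filter
    (fun x => (d₁ : ℤ) ∣ a₁ * x.1 + b₁ * x.2 ∧ (d₂ : ℤ) ∣ a₂ * x.1 + b₂ * x.2 ∧
      (d₃ : ℤ) ∣ a₃ * x.1 ^ 2 + b₃ * x.2 ^ 2 + c₃ * x.1 * x.2)).card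

/-- `ρ*(d₁,d₂,d₃)`: as `ρ` but with the extra condition `gcd(x₁, x₂, d₁d₂d₃) = 1`. -/
def rhoStar (a₁ b₁ a₂ b₂ a₃ b₃ c₃ : ℤ) (d₁ d₂ d₃ : ℕ) : ℕ :=
  ((Finset.range (d₁ * d₂ * d₃) ×ˢ Finset.range (d₁ * d₂ * d₃)).filter
    (fun x => (d₁ : ℤ) ∣ a₁ * x.1 + b₁ * x.2 ∧ (d₂ : ℤ) ∣ a₂ * x.1 + b₂ * x.2 ∧
      (d₃ : ℤ) ∣ a₃ * x.1 ^ 2 + b₃ * x.2 ^ 2 + c₃ * x.1 * x.2 ∧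
      Nat.gcd (Nat.gcd x.1 x.2) (d₁ * d₂ * d₃) = 1)).card

open Finset


lemma dvd_iff_of_modEq {n a b : ℤ} (h : a ≡ b [ZMOD n]) : n ∣ a ↔ n ∣ b := by
  constructor <;> intro hd
  · exact Int.modEq_zero_iff_dvd.mp (h.symm.trans (Int.modEq_zero_iff_dvd.mpr hd))
  · exact Int.modEq_zero_iff_dvd.mp (h.trans (Int.modEq_zero_iff_dvd.mpr hd))

lemma pow_shift (p : ℕ) (hp : 0 < p) (ν k : ℕ) (t : ℤ) :
    (p:ℤ)^ν ∣ (p:ℤ)^k * t ↔ (p:ℤ)^(ν - k) ∣ t := by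
  rcases le_or_gt ν k with h | h
  · rw [Nat.sub_eq_zero_of_le h, pow_zero]
    simp only [one_dvd, iff_true]
    exact (pow_dvd_pow (p:ℤ) h).trans (dvd_mul_right _ t)
  · have hpe : (p:ℤ)^ν = (p:ℤ)^k * (p:ℤ)^(ν-k) := by
      rw [← pow_add]; congr 1; omega
    rw [hpe, mul_dvd_mul_iff_left (pow_ne_zero k (by exact_mod_cast hp.ne' : (p:ℤ) ≠ 0))]

lemma scale_count (t R : ℕ) (ht : 0 < t) (P : ℕ × ℕ → Prop) [DecidablePred P] :
    ((Finset.range (t * R) ×ˢ Finset.range (t * R)).filter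
      (fun z => t ∣ z.1 ∧ t ∣ z.2 ∧ P (z.1 / t, z.2 / t))).card
    = ((Finset.range R ×ˢ Finset.range R).filter P).card := by
  apply Finset.card_nbij' (i := fun z => (z.1 / t, z.2 / t)) (j := fun y => (t * y.1, t * y.2))
  · intro z hz
    simp only [mem_coe, mem_filter, mem_product, mem_range] at hz ⊢
    obtain ⟨⟨h1, h2⟩, hd1, hd2, hP⟩ := hz
    exact ⟨⟨Nat.div_lt_of_lt_mul h1, Nat.div_lt_of_lt_mul h2⟩, hP⟩
  · intro y hy
    simp only [mem_coe, mem_filter, mem_product, mem_range] at hy ⊢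
    obtain ⟨⟨h1, h2⟩, hP⟩ := hy
    refine ⟨⟨Nat.mul_lt_mul_left ht |>.mpr h1, Nat.mul_lt_mul_left ht |>.mpr h2⟩,
      dvd_mul_right _ _, dvd_mul_right _ _, ?_⟩
    rw [Nat.mul_div_cancel_left _ ht, Nat.mul_div_cancel_left _ ht]
    exact hP
  · intro z hz
    simp only [mem_coe, mem_filter] at hz
    obtain ⟨_, hd1, hd2, _⟩ := hz
    have e1 := Nat.mul_div_cancel' hd1
    have e2 := Nat.mul_div_cancel' hd2
    simp only [e1, e2]
  · intro y hy
    simp [Nat.mul_div_cancel_left _ ht]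

lemma periodic_count (M q : ℕ) (P : ℕ × ℕ → Prop) [DecidablePred P]
    (hP : ∀ z : ℕ × ℕ, P (z.1 % M, z.2 % M) ↔ P z) :
    ((Finset.range (M * q) ×ˢ Finset.range (M * q)).filter P).card
    = ((Finset.range M ×ˢ Finset.range M).filter P).card * q ^ 2 := by
  rcases Nat.eq_zero_or_pos M with rfl | hM
  · simp
  rcases Nat.eq_zero_or_pos q with rfl | hq
  · simp
  have key : ((Finset.range M ×ˢ Finset.range M).filter P).card * q ^ 2
      = (((Finset.range M ×ˢ Finset.range M).filter P) ×ˢ (Finset.range q ×ˢ Finset.range q)).card := by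
    rw [Finset.card_product, Finset.card_product, Finset.card_range]; ring
  rw [key]
  apply Finset.card_nbij' (i := fun z => ((z.1 % M, z.2 % M), (z.1 / M, z.2 / M)))
    (j := fun w => (w.1.1 + M * w.2.1, w.1.2 + M * w.2.2))
  · intro z hz
    simp only [mem_coe, mem_filter, mem_product, mem_range] at hz ⊢
    obtain ⟨⟨h1, h2⟩, hPz⟩ := hz
    exact ⟨⟨⟨Nat.mod_lt _ hM, Nat.mod_lt _ hM⟩, (hP z).mpr hPz⟩,
      Nat.div_lt_of_lt_mul h1, Nat.div_lt_of_lt_mul h2⟩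
  · intro w hw
    simp only [mem_coe, mem_filter, mem_product, mem_range] at hw ⊢
    obtain ⟨⟨⟨ha, hb⟩, hPw⟩, hu, hv⟩ := hw
    have hlt : ∀ a u : ℕ, a < M → u < q → a + M * u < M * q := by
      intro a u h1 h2
      calc a + M * u < M + M * u := by omega
        _ = M * (u + 1) := by ring
        _ ≤ M * q := Nat.mul_le_mul_left _ (by omega)
    refine ⟨⟨hlt _ _ ha hu, hlt _ _ hb hv⟩, ?_⟩
    have e1 : (w.1.1 + M * w.2.1) % M = w.1.1 := by
      rw [Nat.add_mul_mod_self_left, Nat.mod_eq_of_lt ha]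
    have e2 : (w.1.2 + M * w.2.2) % M = w.1.2 := by
      rw [Nat.add_mul_mod_self_left, Nat.mod_eq_of_lt hb]
    have := hP (w.1.1 + M * w.2.1, w.1.2 + M * w.2.2)
    simp only [e1, e2] at this
    exact this.mp hPw
  · intro z hz
    simp [Nat.mod_add_div]
  · intro w hw
    simp only [mem_coe, mem_filter, mem_product, mem_range] at hw
    obtain ⟨⟨⟨ha, hb⟩, _⟩, hu, hv⟩ := hw
    have e1 : (w.1.1 + M * w.2.1) % M = w.1.1 := by
      rw [Nat.add_mul_mod_self_left, Nat.mod_eq_of_lt ha]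
    have e2 : (w.1.2 + M * w.2.2) % M = w.1.2 := by
      rw [Nat.add_mul_mod_self_left, Nat.mod_eq_of_lt hb]
    have e3 : (w.1.1 + M * w.2.1) / M = w.2.1 := by
      rw [Nat.add_mul_div_left _ _ hM, Nat.div_eq_of_lt ha, Nat.zero_add]
    have e4 : (w.1.2 + M * w.2.2) / M = w.2.2 := by
      rw [Nat.add_mul_div_left _ _ hM, Nat.div_eq_of_lt hb, Nat.zero_add]
    simp only [e1, e2, e3, e4]

set_option maxHeartbeats 2000000 in
theorem stmt8 (a₁ b₁ a₂ b₂ a₃ b₃ c₃ : ℤ)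
    (h1prim : Int.gcd a₁ b₁ = 1) (h2prim : Int.gcd a₂ b₂ = 1)
    (hprop : a₁ * b₂ - a₂ * b₁ ≠ 0)
    (hQprim : Int.gcd (Int.gcd a₃ b₃) c₃ = 1)
    (hirr : ¬ IsSquare (c₃ ^ 2 - 4 * a₃ * b₃))
    (p : ℕ) (hp : p.Prime) (ν₁ ν₂ ν₃ : ℕ) :
    rho a₁ b₁ a₂ b₂ a₃ b₃ c₃ (p ^ ν₁) (p ^ ν₂) (p ^ ν₃) =
      ∑ k ∈ Finset.range (max (max ν₁ ν₂) ((ν₃ + 1) / 2) + 1),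
        rhoStar a₁ b₁ a₂ b₂ a₃ b₃ c₃ (p ^ (ν₁ - k)) (p ^ (ν₂ - k)) (p ^ (ν₃ - 2 * k)) *
          p ^ (2 * (min ν₁ k + min ν₂ k + min ν₃ (2 * k) - k)) := by
  classical
  clear h1prim h2prim hprop hQprim hirr
  have hp0 : 0 < p := hp.pos
  set K := max (max ν₁ ν₂) ((ν₃ + 1) / 2) with hK
  unfold rho
  have hbox : p ^ ν₁ * p ^ ν₂ * p ^ ν₃ = p ^ (ν₁ + ν₂ + ν₃) := by
    rw [← pow_add, ← pow_add]
  rw [hbox]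
  set c : ℕ × ℕ → ℕ :=
    fun x => if x.1.gcd x.2 = 0 then K else min K ((x.1.gcd x.2).factorization p) with hc
  rw [Finset.card_eq_sum_card_fiberwise (f := c) (t := Finset.range (K + 1))
    (fun x _ => by
      simp only [hc, Finset.mem_coe, Finset.mem_range]
      split <;> omega)]
  refine Finset.sum_congr rfl ?_
  intro k hk
  have hkK : k ≤ K := Nat.lt_succ_iff.mp (Finset.mem_range.mp hk)
  clear hk
  have hpk : 0 < p ^ k := pow_pos hp0 k
  set E := ν₁ - k + (ν₂ - k) + (ν₃ - 2 * k) with hEdef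
  set m := min ν₁ k + min ν₂ k + min ν₃ (2 * k) - k with hm
  set Q : ℕ × ℕ → Prop := fun z =>
    ((p ^ (ν₁ - k) : ℕ) : ℤ) ∣ a₁ * z.1 + b₁ * z.2 ∧
    ((p ^ (ν₂ - k) : ℕ) : ℤ) ∣ a₂ * z.1 + b₂ * z.2 ∧
    ((p ^ (ν₃ - 2 * k) : ℕ) : ℤ) ∣ a₃ * z.1 ^ 2 + b₃ * z.2 ^ 2 + c₃ * z.1 * z.2 ∧
    Nat.gcd (Nat.gcd z.1 z.2) (p ^ E) = 1 with hQdef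
  have hE0K : k = K → E = 0 := by clear * - hEdef hK hkK; omega
  have hEposK : k ≠ K → 0 < E := by clear * - hEdef hK hkK; omega
  have hle1 : ν₁ - k ≤ E := by clear * - hEdef; omega
  have hle2 : ν₂ - k ≤ E := by clear * - hEdef; omega
  have hle3 : ν₃ - 2 * k ≤ E := by clear * - hEdef; omega
  -- the divisibility/gcd transfer under scaling
  have hQiff : ∀ x : ℕ × ℕ, p ^ k ∣ x.1 → p ^ k ∣ x.2 →
      (((((p ^ ν₁ : ℕ) : ℤ) ∣ a₁ * x.1 + b₁ * x.2 ∧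
         ((p ^ ν₂ : ℕ) : ℤ) ∣ a₂ * x.1 + b₂ * x.2 ∧
         ((p ^ ν₃ : ℕ) : ℤ) ∣ a₃ * x.1 ^ 2 + b₃ * x.2 ^ 2 + c₃ * x.1 * x.2) ∧
        (k = K ∨ ¬ p ^ (k + 1) ∣ Nat.gcd x.1 x.2)) ↔ Q (x.1 / p ^ k, x.2 / p ^ k)) := by
    rintro ⟨u, v⟩ ht1 ht2
    obtain ⟨y₁, rfl⟩ := ht1
    obtain ⟨y₂, rfl⟩ := ht2
    simp only
    rw [Nat.mul_div_cancel_left _ hpk, Nat.mul_div_cancel_left _ hpk, hQdef]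
    simp only [Nat.cast_pow]
    have d1 : (p : ℤ) ^ ν₁ ∣ a₁ * ((p ^ k * y₁ : ℕ) : ℤ) + b₁ * ((p ^ k * y₂ : ℕ) : ℤ) ↔
        (p : ℤ) ^ (ν₁ - k) ∣ a₁ * (y₁ : ℤ) + b₁ * (y₂ : ℤ) := by
      rw [show a₁ * ((p ^ k * y₁ : ℕ) : ℤ) + b₁ * ((p ^ k * y₂ : ℕ) : ℤ)
          = (p : ℤ) ^ k * (a₁ * (y₁ : ℤ) + b₁ * (y₂ : ℤ)) by push_cast; ring]
      exact pow_shift p hp0 _ _ _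
    have d2 : (p : ℤ) ^ ν₂ ∣ a₂ * ((p ^ k * y₁ : ℕ) : ℤ) + b₂ * ((p ^ k * y₂ : ℕ) : ℤ) ↔
        (p : ℤ) ^ (ν₂ - k) ∣ a₂ * (y₁ : ℤ) + b₂ * (y₂ : ℤ) := by
      rw [show a₂ * ((p ^ k * y₁ : ℕ) : ℤ) + b₂ * ((p ^ k * y₂ : ℕ) : ℤ)
          = (p : ℤ) ^ k * (a₂ * (y₁ : ℤ) + b₂ * (y₂ : ℤ)) by push_cast; ring]
      exact pow_shift p hp0 _ _ _
    have d3 : (p : ℤ) ^ ν₃ ∣ a₃ * ((p ^ k * y₁ : ℕ) : ℤ) ^ 2 + b₃ * ((p ^ k * y₂ : ℕ) : ℤ) ^ 2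
          + c₃ * ((p ^ k * y₁ : ℕ) : ℤ) * ((p ^ k * y₂ : ℕ) : ℤ) ↔
        (p : ℤ) ^ (ν₃ - 2 * k) ∣ a₃ * (y₁ : ℤ) ^ 2 + b₃ * (y₂ : ℤ) ^ 2
          + c₃ * (y₁ : ℤ) * (y₂ : ℤ) := by
      rw [show a₃ * ((p ^ k * y₁ : ℕ) : ℤ) ^ 2 + b₃ * ((p ^ k * y₂ : ℕ) : ℤ) ^ 2
          + c₃ * ((p ^ k * y₁ : ℕ) : ℤ) * ((p ^ k * y₂ : ℕ) : ℤ)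
          = (p : ℤ) ^ (2 * k) * (a₃ * (y₁ : ℤ) ^ 2 + b₃ * (y₂ : ℤ) ^ 2
            + c₃ * (y₁ : ℤ) * (y₂ : ℤ)) by
        rw [two_mul, pow_add]; push_cast; ring]
      exact pow_shift p hp0 _ _ _
    have hgg : Nat.gcd (p ^ k * y₁) (p ^ k * y₂) = p ^ k * Nat.gcd y₁ y₂ :=
      Nat.gcd_mul_left _ _ _
    have hdd : p ^ (k + 1) ∣ Nat.gcd (p ^ k * y₁) (p ^ k * y₂) ↔ p ∣ Nat.gcd y₁ y₂ := by
      rw [hgg, pow_succ, Nat.mul_dvd_mul_iff_left hpk]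
    have g1 : (k = K ∨ ¬ p ^ (k + 1) ∣ Nat.gcd (p ^ k * y₁) (p ^ k * y₂)) ↔
        Nat.gcd (Nat.gcd y₁ y₂) (p ^ E) = 1 := by
      by_cases hkK' : k = K
      · have hE0 : E = 0 := hE0K hkK'
        rw [hE0, pow_zero]
        simp [hkK', Nat.gcd_one_right]
      · have hEpos : 0 < E := hEposK hkK'
        have hco : Nat.gcd (Nat.gcd y₁ y₂) (p ^ E) = 1 ↔ ¬ p ∣ Nat.gcd y₁ y₂ := by
          rw [show (Nat.gcd (Nat.gcd y₁ y₂) (p ^ E) = 1) ↔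
              Nat.Coprime (Nat.gcd y₁ y₂) (p ^ E) from Iff.rfl,
            Nat.coprime_pow_right_iff hEpos, Nat.coprime_comm]
          exact hp.coprime_iff_not_dvd
        constructor
        · rintro (h | h)
          · exact absurd h hkK'
          · exact hco.mpr (fun hd => h (hdd.mpr hd))
        · intro h
          exact Or.inr (fun hd => (hco.mp h) (hdd.mp hd))
    rw [d1, d2, d3]
    constructor
    · rintro ⟨⟨h1, h2, h3⟩, hG⟩
      exact ⟨h1, h2, h3, g1.mp hG⟩
    · rintro ⟨h1, h2, h3, hG⟩
      exact ⟨⟨h1, h2, h3⟩, g1.mpr hG⟩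
  -- classification of c x = k
  have hclass : ∀ x : ℕ × ℕ, (c x = k) ↔
      (p ^ k ∣ Nat.gcd x.1 x.2 ∧ (k = K ∨ ¬ p ^ (k + 1) ∣ Nat.gcd x.1 x.2)) := by
    intro x
    by_cases hg : Nat.gcd x.1 x.2 = 0
    · have hcx : c x = K := by simp only [hc, hg, ↓reduceIte]
      rw [hcx, hg]
      constructor
      · intro h
        exact ⟨dvd_zero _, Or.inl h.symm⟩
      · rintro ⟨-, h | h⟩
        · exact h.symm
        · exact absurd (dvd_zero _) h
    · have hfac : ∀ j : ℕ, p ^ j ∣ Nat.gcd x.1 x.2 ↔ j ≤ (Nat.gcd x.1 x.2).factorization p :=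
        fun j => hp.pow_dvd_iff_le_factorization hg
      simp only [hc, if_neg hg]
      rw [hfac k, hfac (k + 1)]
      clear * - hkK
      omega
  rw [Finset.filter_filter]
  have step1 : Finset.filter
        (fun x : ℕ × ℕ => (((p ^ ν₁ : ℕ) : ℤ) ∣ a₁ * x.1 + b₁ * x.2 ∧
          ((p ^ ν₂ : ℕ) : ℤ) ∣ a₂ * x.1 + b₂ * x.2 ∧
          ((p ^ ν₃ : ℕ) : ℤ) ∣ a₃ * x.1 ^ 2 + b₃ * x.2 ^ 2 + c₃ * x.1 * x.2) ∧ c x = k)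
        (Finset.range (p ^ (ν₁ + ν₂ + ν₃)) ×ˢ Finset.range (p ^ (ν₁ + ν₂ + ν₃)))
      = Finset.filter
        (fun x : ℕ × ℕ => p ^ k ∣ x.1 ∧ p ^ k ∣ x.2 ∧ Q (x.1 / p ^ k, x.2 / p ^ k))
        (Finset.range (p ^ (ν₁ + ν₂ + ν₃)) ×ˢ Finset.range (p ^ (ν₁ + ν₂ + ν₃))) := by
    apply Finset.filter_congr
    intro x _
    constructor
    · rintro ⟨hcond, hck⟩
      obtain ⟨hgd, hG⟩ := (hclass x).mp hck
      have ht1 : p ^ k ∣ x.1 := hgd.trans (Nat.gcd_dvd_left _ _)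
      have ht2 : p ^ k ∣ x.2 := hgd.trans (Nat.gcd_dvd_right _ _)
      exact ⟨ht1, ht2, (hQiff x ht1 ht2).mp ⟨hcond, hG⟩⟩
    · rintro ⟨ht1, ht2, hQx⟩
      obtain ⟨hcond, hG⟩ := (hQiff x ht1 ht2).mpr hQx
      exact ⟨hcond, (hclass x).mpr ⟨Nat.dvd_gcd ht1 ht2, hG⟩⟩
  rw [step1]
  have hsize : p ^ (ν₁ + ν₂ + ν₃) = p ^ k * (p ^ E * p ^ m) := by
    rw [← pow_add, ← pow_add]; congr 1; clear * - hEdef hm hkK hK; omega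
  rw [hsize]
  rw [scale_count (p ^ k) (p ^ E * p ^ m) hpk Q]
  -- periodicity of Q mod p^E
  have hper : ∀ z : ℕ × ℕ, Q (z.1 % p ^ E, z.2 % p ^ E) ↔ Q z := by
    intro z
    have hme : ∀ (w : ℕ) (e : ℕ), e ≤ E →
        ((w % p ^ E : ℕ) : ℤ) ≡ (w : ℤ) [ZMOD (p : ℤ) ^ e] := by
      intro w e he
      have hcast : ((w % p ^ E : ℕ) : ℤ) = (w : ℤ) % ((p : ℤ) ^ E) := by
        push_cast
        rfl
      rw [hcast]
      exact Int.emod_emod_of_dvd _ (pow_dvd_pow _ he)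
    have hm1 := hme z.1
    have hm2 := hme z.2
    rw [hQdef]
    simp only [Nat.cast_pow]
    have i1 : (p : ℤ) ^ (ν₁ - k) ∣ a₁ * ((z.1 % p ^ E : ℕ) : ℤ) + b₁ * ((z.2 % p ^ E : ℕ) : ℤ) ↔
        (p : ℤ) ^ (ν₁ - k) ∣ a₁ * (z.1 : ℤ) + b₁ * (z.2 : ℤ) :=
      dvd_iff_of_modEq (((hm1 _ hle1).mul_left a₁).add ((hm2 _ hle1).mul_left b₁))
    have i2 : (p : ℤ) ^ (ν₂ - k) ∣ a₂ * ((z.1 % p ^ E : ℕ) : ℤ) + b₂ * ((z.2 % p ^ E : ℕ) : ℤ) ↔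
        (p : ℤ) ^ (ν₂ - k) ∣ a₂ * (z.1 : ℤ) + b₂ * (z.2 : ℤ) :=
      dvd_iff_of_modEq (((hm1 _ hle2).mul_left a₂).add ((hm2 _ hle2).mul_left b₂))
    have i3 : (p : ℤ) ^ (ν₃ - 2 * k) ∣ a₃ * ((z.1 % p ^ E : ℕ) : ℤ) ^ 2
          + b₃ * ((z.2 % p ^ E : ℕ) : ℤ) ^ 2
          + c₃ * ((z.1 % p ^ E : ℕ) : ℤ) * ((z.2 % p ^ E : ℕ) : ℤ) ↔
        (p : ℤ) ^ (ν₃ - 2 * k) ∣ a₃ * (z.1 : ℤ) ^ 2 + b₃ * (z.2 : ℤ) ^ 2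
          + c₃ * (z.1 : ℤ) * (z.2 : ℤ) := by
      refine dvd_iff_of_modEq ?_
      have h1 := hm1 (ν₃ - 2 * k) hle3
      have h2 := hm2 (ν₃ - 2 * k) hle3
      exact (((h1.pow 2).mul_left a₃).add ((h2.pow 2).mul_left b₃)).add
        ((h1.mul_left c₃).mul h2)
    have i4 : Nat.gcd (Nat.gcd (z.1 % p ^ E) (z.2 % p ^ E)) (p ^ E) = 1 ↔
        Nat.gcd (Nat.gcd z.1 z.2) (p ^ E) = 1 := by
      rcases Nat.eq_zero_or_pos E with hE0 | hEpos
      · rw [hE0, pow_zero]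
        simp [Nat.gcd_one_right]
      · have hpdvd : p ∣ p ^ E := dvd_pow_self p hEpos.ne'
        have hch : ∀ u v : ℕ, Nat.gcd (Nat.gcd u v) (p ^ E) = 1 ↔ ¬ (p ∣ u ∧ p ∣ v) := by
          intro u v
          rw [show (Nat.gcd (Nat.gcd u v) (p ^ E) = 1) ↔
              Nat.Coprime (Nat.gcd u v) (p ^ E) from Iff.rfl,
            Nat.coprime_pow_right_iff hEpos, Nat.coprime_comm,
            hp.coprime_iff_not_dvd, Nat.dvd_gcd_iff]
        rw [hch, hch, Nat.dvd_mod_iff hpdvd, Nat.dvd_mod_iff hpdvd]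
    rw [i1, i2, i3, i4]
  rw [periodic_count (p ^ E) (p ^ m) Q hper]
  have hrs : ((Finset.range (p ^ E) ×ˢ Finset.range (p ^ E)).filter Q).card
      = rhoStar a₁ b₁ a₂ b₂ a₃ b₃ c₃ (p ^ (ν₁ - k)) (p ^ (ν₂ - k)) (p ^ (ν₃ - 2 * k)) := by
    unfold rhoStar
    rw [show p ^ (ν₁ - k) * p ^ (ν₂ - k) * p ^ (ν₃ - 2 * k) = p ^ E by
      rw [← pow_add, ← pow_add, ← hEdef]]
  rw [hrs, ← pow_mul, Nat.mul_comm m 2]
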